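/- Let L ≥ 1 and d ≥ 2 be real. Then for all 0 ≤ x ≤ L-1, Γ(L+d)Γ(L) / (Γ(L+d+x)Γ(L-x)) ≤ exp(-2x(x+d)/(2L+d)). -/

import Mathlib

open Filter Real Finset Topology

private lemma term_bound (L d x : ℝ) (hL : 1 ≤ L) (hd : 2 ≤ d)
    (hx0 : 0 ≤ x) (hx1 : x ≤ L - 1) (m : ℕ) :
    x * (x + d) * (1 / (L + d / 2 + m) - 1 / (L + d / 2 + (m + 1 : ℕ))) ≤
      Real.log (L + d + m) + Real.log (L + m) -
        (Real.log (L + d + x + m) + Real.log (L - x + m)) := by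
  have hm : (0 : ℝ) ≤ m := Nat.cast_nonneg m
  set a : ℝ := L + m with ha
  set b : ℝ := L + d + m with hb
  have ha1 : 1 ≤ a := by simp [ha]; nlinarith
  have hax : 1 ≤ a - x := by simp [ha]; nlinarith
  have hbx : 0 < b + x := by simp [hb]; nlinarith
  have hb0 : 0 < b := by simp [hb]; nlinarith
  have ha0 : 0 < a := by linarith
  have hD : 0 < (b + x) * (a - x) := by positivity
  have hP : 0 ≤ x * (x + d) := by nlinarith
  have hab : (b + x) * (a - x) + x * (x + d) = a * b := by
    simp only [ha, hb]; ring
  -- log part:  log(ab) - log((b+x)(a-x)) ≥ x(x+d)/(ab)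
  have h1 : x * (x + d) / (a * b) ≤
      Real.log b + Real.log a - (Real.log (b + x) + Real.log (a - x)) := by
    have := Real.log_le_sub_one_of_pos (show 0 < (b + x) * (a - x) / (a * b) by positivity)
    rw [Real.log_div hD.ne' (by positivity), Real.log_mul hbx.ne' (by linarith),
      Real.log_mul ha0.ne' hb0.ne'] at this
    have h2 : (b + x) * (a - x) / (a * b) - 1 = -(x * (x + d)) / (a * b) := by
      field_simp; linarith [hab]
    rw [h2, neg_div] at this
    linarith
  -- telescoping part
  set c : ℝ := L + d / 2 + m with hc
  have hc0 : 0 < c := by simp [hc]; nlinarith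
  have habc : a * b ≤ c * (c + 1) := by simp only [ha, hb, hc]; nlinarith
  have h3 : x * (x + d) * (1 / (L + d / 2 + m) - 1 / (L + d / 2 + (m + 1 : ℕ))) =
      x * (x + d) / (c * (c + 1)) := by
    push_cast
    rw [hc]
    field_simp
    ring
  rw [h3]
  have h4 : x * (x + d) / (c * (c + 1)) ≤ x * (x + d) / (a * b) := by
    apply div_le_div_of_nonneg_left hP (by positivity) habc
  have : Real.log (L + d + m) + Real.log (L + m) -
      (Real.log (L + d + x + m) + Real.log (L - x + m)) =
      Real.log b + Real.log a - (Real.log (b + x) + Real.log (a - x)) := by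
    simp only [ha, hb]
    ring_nf
  rw [this]
  linarith

/-- Gamma-function bound: for `L ≥ 1`, `d ≥ 2` and `0 ≤ x ≤ L - 1`,
`Γ(L+d)Γ(L)/(Γ(L+d+x)Γ(L-x)) ≤ exp(-2x(x+d)/(2L+d))`. -/
theorem gamma_ratio_le_exp (L d x : ℝ) (hL : 1 ≤ L) (hd : 2 ≤ d)
    (hx0 : 0 ≤ x) (hx1 : x ≤ L - 1) :
    Real.Gamma (L + d) * Real.Gamma L / (Real.Gamma (L + d + x) * Real.Gamma (L - x)) ≤
      Real.exp (-(2 * x * (x + d)) / (2 * L + d)) := by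
  have hL0 : (0 : ℝ) < L := by linarith
  have hLd : (0 : ℝ) < L + d := by linarith
  have hLdx : (0 : ℝ) < L + d + x := by linarith
  have hLx : (0 : ℝ) < L - x := by linarith
  have g1 := Real.Gamma_pos_of_pos hLd
  have g2 := Real.Gamma_pos_of_pos hL0
  have g3 := Real.Gamma_pos_of_pos hLdx
  have g4 := Real.Gamma_pos_of_pos hLx
  -- the key inequality on logs
  set S : ℝ := Real.log (Real.Gamma (L + d + x)) + Real.log (Real.Gamma (L - x)) -
      Real.log (Real.Gamma (L + d)) - Real.log (Real.Gamma L) with hS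
  have key : 2 * x * (x + d) / (2 * L + d) ≤ S := by
    -- limit of the logGammaSeq combination
    have h1 := Real.BohrMollerup.tendsto_log_gamma hLdx
    have h2 := Real.BohrMollerup.tendsto_log_gamma hLx
    have h3 := Real.BohrMollerup.tendsto_log_gamma hLd
    have h4 := Real.BohrMollerup.tendsto_log_gamma hL0
    have hT : Tendsto (fun n => Real.BohrMollerup.logGammaSeq (L + d + x) n +
        Real.BohrMollerup.logGammaSeq (L - x) n -
        Real.BohrMollerup.logGammaSeq (L + d) n -
        Real.BohrMollerup.logGammaSeq L n) atTop (𝓝 S) :=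
      ((h1.add h2).sub h3).sub h4
    have heq : ∀ n : ℕ, Real.BohrMollerup.logGammaSeq (L + d + x) n +
        Real.BohrMollerup.logGammaSeq (L - x) n -
        Real.BohrMollerup.logGammaSeq (L + d) n -
        Real.BohrMollerup.logGammaSeq L n =
        ∑ m ∈ Finset.range (n + 1),
          (Real.log (L + d + m) + Real.log (L + m) -
            (Real.log (L + d + x + m) + Real.log (L - x + m))) := by
      intro n
      simp only [Real.BohrMollerup.logGammaSeq]
      rw [Finset.sum_sub_distrib, Finset.sum_add_distrib, Finset.sum_add_distrib]
      ring
    rw [funext heq] at hT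
    -- lower bounding sequence
    have hg : Tendsto (fun n : ℕ => x * (x + d) *
        (1 / (L + d / 2) - 1 / (L + d / 2 + (n + 1 : ℕ)))) atTop
        (𝓝 (2 * x * (x + d) / (2 * L + d))) := by
      have hz : Tendsto (fun n : ℕ => 1 / (L + d / 2 + (n + 1 : ℕ))) atTop (𝓝 0) := by
        have hA : Tendsto (fun n : ℕ => L + d / 2 + ((n : ℝ) + 1)) atTop atTop :=
          tendsto_atTop_add_const_left _ _
            (tendsto_atTop_add_const_right _ _ tendsto_natCast_atTop_atTop)
        simpa [one_div, Function.comp_def] using tendsto_inv_atTop_zero.comp hA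
      have : Tendsto (fun n : ℕ => x * (x + d) *
          (1 / (L + d / 2) - 1 / (L + d / 2 + (n + 1 : ℕ)))) atTop
          (𝓝 (x * (x + d) * (1 / (L + d / 2) - 0))) :=
        (tendsto_const_nhds.sub hz).const_mul _
      convert this using 2
      have h2Ld : (0 : ℝ) < 2 * L + d := by linarith
      field_simp
      ring
    refine le_of_tendsto_of_tendsto' hg hT fun n => ?_
    -- compare with the telescoping sum
    have htel : ∑ m ∈ Finset.range (n + 1),
        (1 / (L + d / 2 + (m : ℕ)) - 1 / (L + d / 2 + (m + 1 : ℕ))) =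
        1 / (L + d / 2 + (0 : ℕ)) - 1 / (L + d / 2 + (n + 1 : ℕ)) :=
      Finset.sum_range_sub' (fun i : ℕ => 1 / (L + d / 2 + (i : ℕ))) (n + 1)
    calc x * (x + d) * (1 / (L + d / 2) - 1 / (L + d / 2 + (n + 1 : ℕ)))
        = ∑ m ∈ Finset.range (n + 1), x * (x + d) *
            (1 / (L + d / 2 + (m : ℕ)) - 1 / (L + d / 2 + (m + 1 : ℕ))) := by
          rw [← Finset.mul_sum, htel]; norm_num
      _ ≤ ∑ m ∈ Finset.range (n + 1),
            (Real.log (L + d + m) + Real.log (L + m) -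
              (Real.log (L + d + x + m) + Real.log (L - x + m))) := by
          apply Finset.sum_le_sum
          intro m _
          exact term_bound L d x hL hd hx0 hx1 m
  -- convert back to the Gamma ratio
  have hpos : 0 < Real.Gamma (L + d) * Real.Gamma L /
      (Real.Gamma (L + d + x) * Real.Gamma (L - x)) := by positivity
  rw [← Real.exp_log hpos]
  apply Real.exp_le_exp.mpr
  rw [Real.log_div (by positivity) (by positivity), Real.log_mul g1.ne' g2.ne',
    Real.log_mul g3.ne' g4.ne']
  have : -(2 * x * (x + d)) / (2 * L + d) = -(2 * x * (x + d) / (2 * L + d)) := by ring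
  rw [this]
  linarith [key]
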